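/- arXiv:2003.05411 — 2 statements merged into one kernel-verified Lean document; each statement's English description precedes it below -/
import Mathlib

section
/- If a Dirichlet series Σ_{n=2}^∞ a_n n^{-s} converges uniformly on the half-plane {s : Re s > ε} for some ε ≥ 0, then the series Σ_{n=2}^∞ a_n / (n^s log n) also converges uniformly on {s : Re s > ε}. -/
open Filter

/-- Abel summation bound: if partial sums of `g` up to `K` are bounded by `δ` and `f` is
nonnegative and nonincreasing, then `‖∑ k < K, f k • g k‖ ≤ f 0 * δ`. -/
lemma abel_bound (f : ℕ → ℝ) (g : ℕ → ℂ) (K : ℕ) (δ : ℝ)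
    (hf0 : ∀ k, 0 ≤ f k) (hfa : ∀ k, f (k + 1) ≤ f k)
    (hg : ∀ j ≤ K, ‖∑ i ∈ Finset.range j, g i‖ ≤ δ) :
    ‖∑ k ∈ Finset.range K, (f k : ℂ) * g k‖ ≤ f 0 * δ := by
  have hδ : 0 ≤ δ := le_trans (norm_nonneg _) (hg 0 (Nat.zero_le _))
  rcases Nat.eq_zero_or_pos K with hK | hK
  · subst hK; simpa using mul_nonneg (hf0 0) hδ
  have hsmul : ∀ k, (f k : ℂ) * g k = f k • g k := by
    intro k; simp [Complex.real_smul]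
  simp_rw [hsmul]
  rw [Finset.sum_range_by_parts]
  have h1 : ‖f (K - 1) • ∑ i ∈ Finset.range K, g i‖ ≤ f (K - 1) * δ := by
    rw [norm_smul, Real.norm_eq_abs, abs_of_nonneg (hf0 _)]
    exact mul_le_mul_of_nonneg_left (hg K le_rfl) (hf0 _)
  have h2 : ‖∑ i ∈ Finset.range (K - 1), (f (i + 1) - f i) • ∑ j ∈ Finset.range (i + 1), g j‖
      ≤ ∑ i ∈ Finset.range (K - 1), (f i - f (i + 1)) * δ := by
    refine (norm_sum_le _ _).trans (Finset.sum_le_sum fun i hi => ?_)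
    rw [norm_smul, Real.norm_eq_abs, abs_of_nonpos (by linarith [hfa i])]
    have : i + 1 ≤ K := by
      have := Finset.mem_range.mp hi; omega
    have := hg (i + 1) this
    nlinarith [hfa i, norm_nonneg (∑ j ∈ Finset.range (i + 1), g j)]
  have h3 : ∑ i ∈ Finset.range (K - 1), (f i - f (i + 1)) * δ = (f 0 - f (K - 1)) * δ := by
    rw [← Finset.sum_mul, Finset.sum_range_sub' f (K - 1)]
  calc ‖f (K - 1) • ∑ i ∈ Finset.range K, g i -
        ∑ i ∈ Finset.range (K - 1), (f (i + 1) - f i) • ∑ j ∈ Finset.range (i + 1), g j‖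
      ≤ f (K - 1) * δ + ((f 0 - f (K - 1)) * δ) := by
        refine (norm_sub_le _ _).trans (add_le_add h1 ?_); rw [← h3]; exact h2
    _ = f 0 * δ := by ring

/-- If the Dirichlet series `∑_{n≥2} a_n n^{-s}` converges uniformly on `{Re s > ε}` for
some `ε ≥ 0`, then `∑_{n≥2} a_n / (n^s log n)` also converges uniformly on `{Re s > ε}`. -/
theorem integrated_dirichlet_series_unif_conv
    (a : ℕ → ℂ) (ε : ℝ) (hε : 0 ≤ ε) (f : ℂ → ℂ)
    (hf : TendstoUniformlyOn
      (fun N s => ∑ n ∈ Finset.range N,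
        a (n + 2) * Complex.exp (-s * Real.log (n + 2))) f atTop {s : ℂ | ε < s.re}) :
    ∃ g : ℂ → ℂ, TendstoUniformlyOn
      (fun N s => ∑ n ∈ Finset.range N,
        a (n + 2) / (Complex.exp (s * Real.log (n + 2)) * (Real.log (n + 2) : ℂ)))
      g atTop {s : ℂ | ε < s.re} := by
  set t : Set ℂ := {s : ℂ | ε < s.re}
  set b : ℕ → ℂ → ℂ := fun n s => a (n + 2) * Complex.exp (-s * Real.log (n + 2)) with hb
  set lam : ℕ → ℝ := fun n => (Real.log (n + 2))⁻¹ with hlam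
  have hlog2 : (0:ℝ) < Real.log 2 := Real.log_pos (by norm_num)
  have hlogpos : ∀ n : ℕ, 0 < Real.log (n + 2) := by
    intro n
    apply Real.log_pos
    have : (0:ℝ) ≤ (n:ℝ) := n.cast_nonneg
    linarith
  have hlam0 : ∀ n, 0 ≤ lam n := fun n => (inv_pos.mpr (hlogpos n)).le
  have hlamanti : ∀ m n : ℕ, m ≤ n → lam n ≤ lam m := by
    intro m n hmn
    apply inv_anti₀ (hlogpos m)
    apply Real.log_le_log (by positivity)
    have : (m:ℝ) ≤ n := by exact_mod_cast hmn
    linarith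
  have hlamC : ∀ n, lam n ≤ (Real.log 2)⁻¹ := by
    intro n
    apply inv_anti₀ hlog2
    apply Real.log_le_log (by norm_num)
    have : (0:ℝ) ≤ (n:ℝ) := n.cast_nonneg
    linarith
  -- the new terms equal lam n • b n
  have hterm : ∀ (n : ℕ) (s : ℂ),
      a (n + 2) / (Complex.exp (s * Real.log (n + 2)) * (Real.log (n + 2) : ℂ)) =
        (lam n : ℂ) * b n s := by
    intro n s
    have hL : ((Real.log (n + 2) : ℝ) : ℂ) ≠ 0 := by
      exact_mod_cast (hlogpos n).ne'
    have hE : Complex.exp (s * Real.log (n + 2)) ≠ 0 := Complex.exp_ne_zero _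
    rw [hb]
    simp only [hlam]
    push_cast
    rw [neg_mul, Complex.exp_neg]
    field_simp
  -- partial sums of new series
  set P : ℕ → ℂ → ℂ := fun N s => ∑ n ∈ Finset.range N, (lam n : ℂ) * b n s with hP
  have hPeq : (fun N s => ∑ n ∈ Finset.range N,
      a (n + 2) / (Complex.exp (s * Real.log (n + 2)) * (Real.log (n + 2) : ℂ))) = P := by
    funext N s
    exact Finset.sum_congr rfl fun n _ => hterm n s
  -- uniform Cauchy of the original partial sums
  have hC : UniformCauchySeqOn
      (fun N s => ∑ n ∈ Finset.range N, b n s) atTop t := hf.uniformCauchySeqOn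
  rw [Metric.uniformCauchySeqOn_iff] at hC
  -- show P is uniformly Cauchy
  have hPC : UniformCauchySeqOn P atTop t := by
    rw [Metric.uniformCauchySeqOn_iff]
    intro ε' hε'
    set δ : ℝ := ε' * Real.log 2 / 2 with hδdef
    have hδ : 0 < δ := by positivity
    obtain ⟨N₀, hN₀⟩ := hC δ hδ
    refine ⟨N₀, fun m hm n hn s hs => ?_⟩
    -- wlog n ≤ m via symmetry
    have key : ∀ M N, N₀ ≤ M → M ≤ N → dist (P N s) (P M s) < ε' := by
      intro M N hM hMN
      obtain ⟨K, rfl⟩ : ∃ K, N = M + K := ⟨N - M, by omega⟩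
      rw [dist_eq_norm]
      have hsplit : P (M + K) s - P M s =
          ∑ k ∈ Finset.range K, ((lam (M + k) : ℂ)) * b (M + k) s := by
        simp [hP, Finset.sum_range_add]
      rw [hsplit]
      have habel := abel_bound (fun k => lam (M + k)) (fun k => b (M + k) s) K δ
        (fun k => hlam0 _) (fun k => hlamanti _ _ (by omega))
        (fun j hj => by
          have : ∑ i ∈ Finset.range j, b (M + i) s =
              (∑ i ∈ Finset.range (M + j), b i s) - ∑ i ∈ Finset.range M, b i s := by
            rw [Finset.sum_range_add]; ring
          rw [this, ← dist_eq_norm]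
          exact (hN₀ (M + j) (by omega) M hM s hs).le)
      calc ‖∑ k ∈ Finset.range K, ((lam (M + k) : ℂ)) * b (M + k) s‖
          ≤ lam M * δ := by simpa using habel
        _ ≤ (Real.log 2)⁻¹ * δ := mul_le_mul_of_nonneg_right (hlamC M) hδ.le
        _ = ε' / 2 := by
            rw [hδdef]; field_simp
        _ < ε' := by linarith
    rcases le_total m n with h | h
    · rw [dist_comm]; exact key m n hm h
    · exact key n m hn h
  -- pointwise limits exist, define g
  have hcs : ∀ s ∈ t, ∃ L, Tendsto (fun N => P N s) atTop (nhds L) :=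
    fun s hs => cauchySeq_tendsto_of_complete (hPC.cauchySeq hs)
  classical
  refine ⟨fun s => if hs : s ∈ t then (hcs s hs).choose else 0, ?_⟩
  rw [hPeq]
  apply hPC.tendstoUniformlyOn_of_tendsto
  intro s hs
  simpa [dif_pos hs] using (hcs s hs).choose_spec
end

section
/- Let λ ∈ ℂ with λ ≠ 0 and λ ≠ −log n for every integer n ≥ 2. If the Dirichlet series Σ_{n=2}^∞ b_n n^{-s} converges uniformly on the half-plane {s : Re s > ε} for some ε ≥ 0, then for every 0 < δ < 1 the series Σ_{n=2}^∞ b_n / ((log n + λ) n^{s+δ}) converges uniformly on {s : Re s > ε}. -/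
open Filter Topology

/-- Resolvent estimate: let `λ ≠ 0` with `λ ≠ -log n` for all `n ≥ 2`. If
`∑_{n≥2} b_n n^{-s}` converges uniformly on `{Re s > ε}` (some `ε ≥ 0`), then for every
`0 < δ < 1` the series `∑_{n≥2} b_n / ((log n + λ) n^{s+δ})` converges uniformly on
`{Re s > ε}`. -/
theorem resolvent_dirichlet_series_unif_conv
    (l : ℂ) (hl0 : l ≠ 0) (hl : ∀ n : ℕ, 2 ≤ n → l ≠ -(Real.log n : ℂ))
    (b : ℕ → ℂ) (ε : ℝ) (hε : 0 ≤ ε) (f : ℂ → ℂ)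
    (hf : TendstoUniformlyOn
      (fun N s => ∑ n ∈ Finset.range N,
        b (n + 2) * Complex.exp (-s * Real.log (n + 2))) f atTop {s : ℂ | ε < s.re}) :
    ∀ δ : ℝ, 0 < δ → δ < 1 →
      ∃ g : ℂ → ℂ, TendstoUniformlyOn
        (fun N s => ∑ n ∈ Finset.range N,
          b (n + 2) / (((Real.log (n + 2) : ℂ) + l) *
            Complex.exp ((s + δ) * Real.log (n + 2))))
        g atTop {s : ℂ | ε < s.re} := by
  intro δ hδ0 hδ1
  -- notation
  set a : ℕ → ℂ → ℂ := fun n s => b (n + 2) * Complex.exp (-s * Real.log (n + 2)) with ha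
  set S : ℕ → ℂ → ℂ := fun N s => ∑ n ∈ Finset.range N, a n s with hSdef
  set w : ℕ → ℂ := fun n => (Real.log (n + 2) : ℂ) + l with hw
  -- lower bound on ‖w n‖
  obtain ⟨d, hd0, hd⟩ : ∃ d > 0, ∀ n : ℕ, d ≤ ‖w n‖ := by
    obtain ⟨K, hK⟩ : ∃ K : ℕ, ∀ n : ℕ, K ≤ n → ‖l‖ + 1 ≤ Real.log ((n : ℝ) + 2) := by
      refine ⟨⌈Real.exp (‖l‖ + 1)⌉₊, fun n hn => ?_⟩
      have h1 : Real.exp (‖l‖ + 1) ≤ (n : ℝ) + 2 := by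
        calc Real.exp (‖l‖ + 1) ≤ (⌈Real.exp (‖l‖ + 1)⌉₊ : ℝ) := Nat.le_ceil _
          _ ≤ (n : ℝ) := Nat.cast_le.mpr hn
          _ ≤ (n : ℝ) + 2 := by linarith
      calc ‖l‖ + 1 = Real.log (Real.exp (‖l‖ + 1)) := (Real.log_exp _).symm
        _ ≤ Real.log ((n : ℝ) + 2) := Real.log_le_log (Real.exp_pos _) h1
    have hwne' : ∀ k : ℕ, w k ≠ 0 := by
      intro k h0
      apply hl (k + 2) (by omega)
      have : (Real.log ((k : ℝ) + 2) : ℂ) + l = 0 := h0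
      have h2 : l = -(Real.log ((k : ℝ) + 2) : ℂ) := by linear_combination this
      rw [h2]
      norm_num
    set F : Finset ℝ := insert 1 ((Finset.range K).image fun n => ‖w n‖) with hF
    have hFne : F.Nonempty := ⟨1, Finset.mem_insert_self _ _⟩
    refine ⟨F.min' hFne, ?_, fun n => ?_⟩
    · rw [gt_iff_lt, Finset.lt_min'_iff]
      intro y hy
      rcases Finset.mem_insert.mp hy with h | h
      · rw [h]; norm_num
      · obtain ⟨k, -, rfl⟩ := Finset.mem_image.mp h
        rw [norm_pos_iff]
        exact hwne' k
    · by_cases hn : n < K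
      · exact Finset.min'_le _ _
          (Finset.mem_insert_of_mem (Finset.mem_image_of_mem _ (Finset.mem_range.mpr hn)))
      · have h1 : F.min' hFne ≤ 1 := Finset.min'_le _ _ (Finset.mem_insert_self _ _)
        have h2 : ‖l‖ + 1 ≤ Real.log ((n : ℝ) + 2) := hK n (le_of_not_gt hn)
        have h3 : ‖(Real.log ((n : ℝ) + 2) : ℂ)‖ - ‖-l‖ ≤ ‖(Real.log ((n : ℝ) + 2) : ℂ) - -l‖ :=
          norm_sub_norm_le _ _
        have h4 : ‖(Real.log ((n : ℝ) + 2) : ℂ)‖ = Real.log ((n : ℝ) + 2) := by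
          rw [Complex.norm_real, Real.norm_eq_abs, abs_of_nonneg]
          exact Real.log_nonneg (by linarith [Nat.cast_nonneg (α := ℝ) n])
        have h5 : (Real.log ((n : ℝ) + 2) : ℂ) - -l = w n := by rw [hw]; ring
        rw [h4, norm_neg, h5] at h3
        have : (1 : ℝ) ≤ ‖w n‖ := by linarith
        linarith
  have hwne : ∀ n, w n ≠ 0 := fun n => by
    intro h
    have := hd n
    rw [h, norm_zero] at this
    linarith
  -- the coefficient sequence
  set u : ℕ → ℝ := fun n => ((n : ℝ) + 2) ^ (-δ) with hu
  set c : ℕ → ℂ := fun n => (u n : ℂ) / w n with hc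
  have hun : ∀ n, 0 < u n := fun n => Real.rpow_pos_of_pos (by positivity) _
  have hu1 : ∀ n, u n ≤ 1 := fun n =>
    Real.rpow_le_one_of_one_le_of_nonpos
      (by have := Nat.cast_nonneg (α := ℝ) n; linarith) (by linarith)
  have huanti : ∀ n, u (n + 1) ≤ u n := fun n =>
    Real.rpow_le_rpow_of_nonpos (by positivity) (by push_cast; linarith) (by linarith)
  have hcn : ∀ n, ‖c n‖ ≤ 1 / d := by
    intro n
    rw [hc, norm_div]
    have h1 : ‖(u n : ℂ)‖ ≤ 1 := by
      rw [Complex.norm_real, Real.norm_eq_abs, abs_of_pos (hun n)]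
      exact hu1 n
    exact div_le_div₀ zero_le_one h1 hd0 (hd n)
  -- the term identity
  have hterm : ∀ n (s : ℂ),
      b (n + 2) / (((Real.log (n + 2) : ℂ) + l) * Complex.exp ((s + δ) * Real.log (n + 2))) =
        c n • a n s := by
    intro n s
    have hpos : (0 : ℝ) < (n : ℝ) + 2 := by positivity
    have hu' : (u n : ℂ) = Complex.exp (-(δ : ℂ) * (Real.log ((n : ℝ) + 2) : ℂ)) := by
      rw [hu]
      simp only
      rw [Real.rpow_def_of_pos hpos, Complex.ofReal_exp]
      congr 1
      push_cast
      ring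
    have h1 : Complex.exp (-(δ : ℂ) * (Real.log ((n : ℝ) + 2) : ℂ)) *
        Complex.exp (-s * (Real.log ((n : ℝ) + 2) : ℂ)) *
        Complex.exp ((s + (δ : ℂ)) * (Real.log ((n : ℝ) + 2) : ℂ)) = 1 := by
      rw [← Complex.exp_add, ← Complex.exp_add, ← Complex.exp_zero]
      congr 1
      ring
    have hwn := hwne n
    have hE : Complex.exp ((s + (δ : ℂ)) * (Real.log ((n : ℝ) + 2) : ℂ)) ≠ 0 :=
      Complex.exp_ne_zero _
    rw [ha, hc]
    simp only [smul_eq_mul]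
    rw [hu']
    rw [hw] at hwn ⊢
    simp only at hwn ⊢
    rw [div_mul_eq_mul_div, div_eq_div_iff (mul_ne_zero hwn hE) hwn]
    linear_combination (-(b (n + 2) * ((Real.log ((n : ℝ) + 2) : ℂ) + l))) * h1
  -- variation of c is summable
  have hwinv : ∀ n, ‖(w n)⁻¹‖ ≤ 1 / d := by
    intro n
    rw [norm_inv]
    rw [one_div]
    exact inv_anti₀ hd0 (hd n)
  have hvar : Summable (fun n => ‖c (n + 1) - c n‖) := by
    have hbound : ∀ n, ‖c (n + 1) - c n‖ ≤
        (u n - u (n + 1)) / d + ((n : ℝ) + 2) ^ (-(1 + δ)) / (d * d) := by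
      intro n
      have hsplit : c (n + 1) - c n =
          (u (n + 1) : ℂ) * ((w (n + 1))⁻¹ - (w n)⁻¹) + ((u (n + 1) : ℝ) - u n : ℂ) * (w n)⁻¹ := by
        rw [hc]
        simp only
        field_simp [hwne]
        ring
      have hinvdiff : (w (n + 1))⁻¹ - (w n)⁻¹ = (w n - w (n + 1)) * (w (n + 1))⁻¹ * (w n)⁻¹ := by
        field_simp [hwne]

      have hlogdiff : ‖w n - w (n + 1)‖ ≤ 1 / ((n : ℝ) + 2) := by
        have h5 : w n - w (n + 1) =
            ((Real.log ((n : ℝ) + 2) - Real.log ((n : ℝ) + 1 + 2) : ℝ) : ℂ) := by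
          rw [hw]; push_cast; ring
        rw [h5, Complex.norm_real, Real.norm_eq_abs, abs_sub_comm, abs_of_nonneg]
        · have hlog2 : Real.log ((n : ℝ) + 1 + 2) - Real.log ((n : ℝ) + 2) ≤ 1 / ((n : ℝ) + 2) := by
            rw [← Real.log_div (by positivity) (by positivity)]
            have h6 := Real.log_le_sub_one_of_pos
              (x := ((n : ℝ) + 1 + 2) / ((n : ℝ) + 2)) (by positivity)
            have h7 : ((n : ℝ) + 1 + 2) / ((n : ℝ) + 2) - 1 = 1 / ((n : ℝ) + 2) := by
              field_simp
              ring
            linarith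
          linarith
        · have := Real.log_le_log (by positivity : (0:ℝ) < (n : ℝ) + 2)
            (by linarith : ((n : ℝ) + 2) ≤ (n : ℝ) + 1 + 2)
          linarith
      have hub : ‖((u (n + 1) : ℝ) : ℂ)‖ ≤ u n := by
        rw [Complex.norm_real, Real.norm_eq_abs, abs_of_pos (hun _)]
        exact huanti n
      have hterm1 : ‖(u (n + 1) : ℂ) * ((w (n + 1))⁻¹ - (w n)⁻¹)‖ ≤
          ((n : ℝ) + 2) ^ (-(1 + δ)) / (d * d) := by
        rw [norm_mul, hinvdiff, norm_mul, norm_mul]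
        have hc1 : ‖w n - w (n + 1)‖ * ‖(w (n + 1))⁻¹‖ * ‖(w n)⁻¹‖ ≤
            (1 / ((n : ℝ) + 2)) * (1 / d) * (1 / d) := by
          gcongr <;> first
            | exact hlogdiff
            | exact hwinv _
            | exact norm_nonneg _
            | positivity
        calc ‖((u (n + 1) : ℝ) : ℂ)‖ * (‖w n - w (n + 1)‖ * ‖(w (n + 1))⁻¹‖ * ‖(w n)⁻¹‖)
            ≤ u n * ((1 / ((n : ℝ) + 2)) * (1 / d) * (1 / d)) := by
              apply mul_le_mul hub hc1 (by positivity) (le_of_lt (hun n))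
          _ = (u n * (1 / ((n : ℝ) + 2))) / (d * d) := by ring
          _ = ((n : ℝ) + 2) ^ (-(1 + δ)) / (d * d) := by
              congr 1
              rw [hu]
              simp only
              rw [one_div, ← Real.rpow_neg_one ((n : ℝ) + 2),
                ← Real.rpow_add (by positivity : (0:ℝ) < (n : ℝ) + 2)]
              congr 1
              ring
      have hterm2 : ‖(((u (n + 1) : ℝ) - u n : ℝ) : ℂ) * (w n)⁻¹‖ ≤ (u n - u (n + 1)) / d := by
        rw [norm_mul, Complex.norm_real, Real.norm_eq_abs, abs_sub_comm,
          abs_of_nonneg (by linarith [huanti n])]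
        calc (u n - u (n + 1)) * ‖(w n)⁻¹‖ ≤ (u n - u (n + 1)) * (1 / d) :=
              mul_le_mul_of_nonneg_left (hwinv n) (by linarith [huanti n])
          _ = (u n - u (n + 1)) / d := by ring
      calc ‖c (n + 1) - c n‖ ≤ ‖(u (n + 1) : ℂ) * ((w (n + 1))⁻¹ - (w n)⁻¹)‖ +
            ‖(((u (n + 1) : ℝ) - u n : ℝ) : ℂ) * (w n)⁻¹‖ := by
            rw [hsplit]; push_cast; exact norm_add_le _ _
        _ ≤ ((n : ℝ) + 2) ^ (-(1 + δ)) / (d * d) + (u n - u (n + 1)) / d :=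
            add_le_add hterm1 hterm2
        _ = (u n - u (n + 1)) / d + ((n : ℝ) + 2) ^ (-(1 + δ)) / (d * d) := by ring
    have hs1 : Summable (fun n => u n - u (n + 1)) := by
      apply summable_of_sum_range_le (c := u 0) (fun n => by linarith [huanti n])
      intro n
      rw [Finset.sum_range_sub' u n]
      linarith [(hun n).le]
    have hs2 : Summable (fun n : ℕ => ((n : ℝ) + 2) ^ (-(1 + δ))) := by
      have hp : Summable (fun n : ℕ => (n : ℝ) ^ (-(1 + δ))) :=
        (Real.summable_nat_rpow (p := -(1 + δ))).mpr (by linarith)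
      refine ((summable_nat_add_iff 2).mpr hp).congr fun n => ?_
      push_cast
      ring_nf
    exact Summable.of_nonneg_of_le (fun n => norm_nonneg _) hbound
      ((hs1.div_const d).add (hs2.div_const (d * d)))
  set V : ℝ := ∑' n, ‖c (n + 1) - c n‖ with hV
  have hV0 : 0 ≤ V := tsum_nonneg fun n => norm_nonneg _
  -- partial sums of variation bounded by V
  have hvarsum : ∀ (s : Finset ℕ), ∑ n ∈ s, ‖c (n + 1) - c n‖ ≤ V :=
    fun s => Summable.sum_le_tsum s (fun n _ => norm_nonneg _) hvar
  -- uniform Cauchy of S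
  have hS : UniformCauchySeqOn S atTop {s : ℂ | ε < s.re} := hf.uniformCauchySeqOn
  rw [Metric.uniformCauchySeqOn_iff] at hS
  -- uniform Cauchy of the new partial sums
  set T : ℕ → ℂ → ℂ := fun N s => ∑ n ∈ Finset.range N, c n • a n s with hT
  have hTC : UniformCauchySeqOn T atTop {s : ℂ | ε < s.re} := by
    rw [Metric.uniformCauchySeqOn_iff]
    intro η hη
    have hη' : 0 < η / (1 / d + V + 1) := by positivity
    obtain ⟨M₀, hM₀⟩ := hS _ hη'
    refine ⟨M₀, fun m hm n hn x hx => ?_⟩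
    -- reduce to m ≤ n
    wlog hmn : n ≤ m generalizing m n
    · rw [dist_comm]; exact this n hn m hm (le_of_not_ge hmn)
    rcases eq_or_lt_of_le hmn with h | h
    · simp [h, hη]
    -- Abel summation
    have key : T m x - T n x =
        c (m - 1) • (S m x - S n x) -
          ∑ i ∈ Finset.Ico n (m - 1), (c (i + 1) - c i) • (S (i + 1) x - S n x) := by
      have hnm1 : n ≤ m - 1 := Nat.le_sub_one_of_lt h
      have habel := Finset.sum_Ico_by_parts c (fun i => a i x) h
      have hTmn : T m x - T n x = ∑ i ∈ Finset.Ico n m, c i • a i x := by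
        rw [hT]
        simp only
        rw [Finset.sum_Ico_eq_sub _ h.le]
      have htel : ∑ i ∈ Finset.Ico n (m - 1), (c (i + 1) - c i) = c (m - 1) - c n := by
        rw [Finset.sum_Ico_eq_sub _ hnm1, Finset.sum_range_sub c, Finset.sum_range_sub c]
        ring
      rw [hTmn, habel]
      have hexp : ∑ i ∈ Finset.Ico n (m - 1), (c (i + 1) - c i) • (S (i + 1) x - S n x) =
          (∑ i ∈ Finset.Ico n (m - 1), (c (i + 1) - c i) • S (i + 1) x) -
            (c (m - 1) - c n) • S n x := by
        rw [← htel, Finset.sum_smul, ← Finset.sum_sub_distrib]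
        exact Finset.sum_congr rfl fun i _ => by rw [smul_sub]
      rw [hexp, hSdef]
      simp only [smul_sub, sub_smul]
      abel
    have hdist : dist (T m x) (T n x) = ‖T m x - T n x‖ := dist_eq_norm _ _
    rw [hdist, key]
    have hSb : ∀ k, n ≤ k → ‖S k x - S n x‖ ≤ η / (1 / d + V + 1) := by
      intro k hk
      have := hM₀ k (le_trans hn hk) n hn x hx
      rw [dist_eq_norm] at this
      exact this.le
    calc ‖c (m - 1) • (S m x - S n x) -
          ∑ i ∈ Finset.Ico n (m - 1), (c (i + 1) - c i) • (S (i + 1) x - S n x)‖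
        ≤ ‖c (m - 1) • (S m x - S n x)‖ +
          ‖∑ i ∈ Finset.Ico n (m - 1), (c (i + 1) - c i) • (S (i + 1) x - S n x)‖ :=
          norm_sub_le _ _
      _ ≤ (1 / d) * (η / (1 / d + V + 1)) + V * (η / (1 / d + V + 1)) := by
          gcongr ?_ + ?_
          · rw [norm_smul]
            exact mul_le_mul (hcn _) (hSb m hmn) (norm_nonneg _) (by positivity)
          · calc ‖∑ i ∈ Finset.Ico n (m - 1), (c (i + 1) - c i) • (S (i + 1) x - S n x)‖
                ≤ ∑ i ∈ Finset.Ico n (m - 1), ‖(c (i + 1) - c i) • (S (i + 1) x - S n x)‖ :=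
                  norm_sum_le _ _
              _ ≤ ∑ i ∈ Finset.Ico n (m - 1), ‖c (i + 1) - c i‖ * (η / (1 / d + V + 1)) := by
                  apply Finset.sum_le_sum
                  intro i hi
                  rw [norm_smul]
                  have hni : n ≤ i := (Finset.mem_Ico.mp hi).1
                  exact mul_le_mul_of_nonneg_left (hSb (i + 1) (le_trans hni (Nat.le_succ i)))
                    (norm_nonneg _)
              _ = (∑ i ∈ Finset.Ico n (m - 1), ‖c (i + 1) - c i‖) * (η / (1 / d + V + 1)) := by
                  rw [Finset.sum_mul]
              _ ≤ V * (η / (1 / d + V + 1)) := by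
                  apply mul_le_mul_of_nonneg_right ?_ (by positivity)
                  exact hvarsum _
      _ = (1 / d + V) * (η / (1 / d + V + 1)) := by ring
      _ < η := by
          rw [mul_div_assoc']
          rw [div_lt_iff₀ (by positivity)]
          nlinarith [hη]
  -- conclude
  have hptwise : ∀ x ∈ {s : ℂ | ε < s.re}, ∃ y, Tendsto (fun N => T N x) atTop (𝓝 y) :=
    fun x hx => cauchySeq_tendsto_of_complete (hTC.cauchySeq hx)
  classical
  refine ⟨fun x => if hx : x ∈ {s : ℂ | ε < s.re} then (hptwise x hx).choose else 0, ?_⟩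
  have := hTC.tendstoUniformlyOn_of_tendsto (f := fun x =>
      if hx : x ∈ {s : ℂ | ε < s.re} then (hptwise x hx).choose else 0) ?_
  · -- rewrite terms
    have heq : (fun N s => ∑ n ∈ Finset.range N,
        b (n + 2) / (((Real.log (n + 2) : ℂ) + l) *
          Complex.exp ((s + δ) * Real.log (n + 2)))) = T := by
      funext N s
      exact Finset.sum_congr rfl fun n _ => hterm n s
    rw [heq]
    exact this
  · intro x hx
    simp only [hx, dif_pos]
    exact (hptwise x hx).choose_spec
end
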